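/- arXiv:2402.16376 — 3 statements merged into one kernel-verified Lean document; each statement's English description precedes it below -/
import Mathlib

section
/- Let (µₙ)_{n≥0} and µ be Borel probability measures on ℝ with finite second moments such that µₙ converges narrowly (weakly against bounded continuous functions) to µ and ∫ x² µₙ(dx) → ∫ x² µ(dx). Then limsup_{n→∞} E(µₙ) ≤ E(µ), where the limsup is taken in [−∞,∞). -/
open MeasureTheory Filter
open scoped ENNReal Topology

open Metric Set
open scoped NNReal

noncomputable def klog : ℝ × ℝ → ℝ := fun p => Real.log |p.1 - p.2|

noncomputable def gker (m δ K t : ℝ) : ℝ :=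
  max (max (min (Real.log (|t| + δ)) K) (-m)) (δ - |t| / δ)

variable {Ω : Type*} [MeasurableSpace Ω] [PseudoMetricSpace Ω]
  [SecondCountableTopology Ω] [OpensMeasurableSpace Ω]

lemma section_thickening_left {δ : ℝ} {B : Set (Ω × Ω)} (x : Ω) :
    thickening δ (Prod.mk x ⁻¹' B) ⊆ Prod.mk x ⁻¹' (thickening δ B) := by
  intro y hy
  rw [mem_thickening_iff] at hy
  obtain ⟨z, hz, hdz⟩ := hy
  rw [mem_preimage, mem_thickening_iff]
  refine ⟨(x, z), hz, ?_⟩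
  have hδ : 0 < δ := lt_of_le_of_lt dist_nonneg hdz
  rw [Prod.dist_eq]
  simp only [dist_self]
  exact max_lt hδ hdz

lemma section_thickening_right {δ : ℝ} {B : Set (Ω × Ω)} (y : Ω) :
    thickening δ ((fun x => (x, y)) ⁻¹' B) ⊆ (fun x => (x, y)) ⁻¹' (thickening δ B) := by
  intro x hx
  rw [mem_thickening_iff] at hx
  obtain ⟨z, hz, hdz⟩ := hx
  rw [mem_preimage, mem_thickening_iff]
  refine ⟨(z, y), hz, ?_⟩
  have hδ : 0 < δ := lt_of_le_of_lt dist_nonneg hdz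
  rw [Prod.dist_eq]
  simp only [dist_self]
  exact max_lt hdz hδ

lemma prod_meas_le_of_levyProkhorovEDist_lt (μ ν : Measure Ω)
    [IsProbabilityMeasure μ] [IsProbabilityMeasure ν] {ε : ℝ≥0∞}
    (hε : levyProkhorovEDist μ ν < ε) (hεtop : ε < ∞) {B : Set (Ω × Ω)}
    (hB : MeasurableSet B) :
    (μ.prod μ) B ≤ (ν.prod ν) (thickening (2 * ε).toReal B) + 2 * ε := by
  set C := thickening ε.toReal B with hC
  have hCopen : IsOpen C := isOpen_thickening
  have hCm : MeasurableSet C := hCopen.measurableSet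
  have step1 : (μ.prod μ) B ≤ (μ.prod ν) C + ε := by
    rw [Measure.prod_apply hB, Measure.prod_apply hCm]
    calc ∫⁻ x, μ (Prod.mk x ⁻¹' B) ∂μ
        ≤ ∫⁻ x, (ν (Prod.mk x ⁻¹' C) + ε) ∂μ := by
          apply lintegral_mono
          intro x
          have h1 : μ (Prod.mk x ⁻¹' B) ≤ ν (thickening ε.toReal (Prod.mk x ⁻¹' B)) + ε :=
            left_measure_le_of_levyProkhorovEDist_lt hε (measurable_prodMk_left hB)
          exact h1.trans (add_le_add_left (measure_mono (section_thickening_left x)) ε)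
      _ = ∫⁻ x, ν (Prod.mk x ⁻¹' C) ∂μ + ε := by
          rw [lintegral_add_right _ measurable_const, lintegral_const,
            measure_univ, mul_one]
  have step2 : (μ.prod ν) C ≤ (ν.prod ν) (thickening ε.toReal C) + ε := by
    have hDm : MeasurableSet (thickening ε.toReal C) := isOpen_thickening.measurableSet
    rw [Measure.prod_apply_symm hCm, Measure.prod_apply_symm hDm]
    calc ∫⁻ y, μ ((fun x => (x, y)) ⁻¹' C) ∂ν
        ≤ ∫⁻ y, (ν ((fun x => (x, y)) ⁻¹' thickening ε.toReal C) + ε) ∂ν := by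
          apply lintegral_mono
          intro y
          have hsec : MeasurableSet ((fun x => (x, y)) ⁻¹' C) :=
            (measurable_prodMk_right (y := y)) hCm
          have h1 : μ ((fun x => (x, y)) ⁻¹' C)
              ≤ ν (thickening ε.toReal ((fun x => (x, y)) ⁻¹' C)) + ε :=
            left_measure_le_of_levyProkhorovEDist_lt hε hsec
          exact h1.trans (add_le_add_left (measure_mono (section_thickening_right y)) ε)
      _ = ∫⁻ y, ν ((fun x => (x, y)) ⁻¹' thickening ε.toReal C) ∂ν + ε := by
          rw [lintegral_add_right _ measurable_const, lintegral_const,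
            measure_univ, mul_one]
  have hsub : thickening ε.toReal C ⊆ thickening (2 * ε).toReal B := by
    rw [hC]
    refine (thickening_thickening_subset _ _ _).trans (thickening_mono ?_ _)
    rw [ENNReal.toReal_mul]
    norm_num [two_mul]
  calc (μ.prod μ) B ≤ (μ.prod ν) C + ε := step1
    _ ≤ (ν.prod ν) (thickening ε.toReal C) + ε + ε := add_le_add_left step2 ε
    _ ≤ (ν.prod ν) (thickening (2 * ε).toReal B) + ε + ε :=
        add_le_add_left (add_le_add_left (measure_mono hsub) ε) ε
    _ = (ν.prod ν) (thickening (2 * ε).toReal B) + 2 * ε := by ring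

lemma levyProkhorovEDist_prod_le {Ω : Type*} [MeasurableSpace Ω] [PseudoMetricSpace Ω]
    [SecondCountableTopology Ω] [OpensMeasurableSpace Ω] (μ ν : Measure Ω)
    [IsProbabilityMeasure μ] [IsProbabilityMeasure ν] :
    levyProkhorovEDist (μ.prod μ) (ν.prod ν) ≤ 2 * levyProkhorovEDist μ ν := by
  apply levyProkhorovEDist_le_of_forall
  intro ε B hlt hεtop hB
  have hε2top : ε / 2 < ∞ := lt_of_le_of_lt (ENNReal.half_le_self) hεtop
  have hd : levyProkhorovEDist μ ν < ε / 2 := by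
    rw [ENNReal.lt_div_iff_mul_lt (by norm_num) (by norm_num)]
    calc levyProkhorovEDist μ ν * 2 = 2 * levyProkhorovEDist μ ν := mul_comm _ _
      _ < ε := hlt
  have h2 : 2 * (ε / 2) = ε := ENNReal.mul_div_cancel' (by norm_num) (by norm_num)
  constructor
  · have := prod_meas_le_of_levyProkhorovEDist_lt μ ν hd hε2top hB
    rwa [h2] at this
  · have hd' : levyProkhorovEDist ν μ < ε / 2 := by rwa [levyProkhorovEDist_comm]
    have := prod_meas_le_of_levyProkhorovEDist_lt ν μ hd' hε2top hB
    rwa [h2] at this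

lemma narrow_to_lp (mus : ℕ → Measure ℝ) (mu : Measure ℝ)
    [∀ n, IsProbabilityMeasure (mus n)] [IsProbabilityMeasure mu]
    (hnarrow : ∀ g : BoundedContinuousFunction ℝ ℝ,
      Tendsto (fun n => ∫ x, g x ∂(mus n)) atTop (𝓝 (∫ x, g x ∂mu))) :
    Tendsto (fun n => levyProkhorovEDist (mus n) mu) atTop (𝓝 0) := by
  set Pn : ℕ → ProbabilityMeasure ℝ := fun n => ⟨mus n, inferInstance⟩
  set P : ProbabilityMeasure ℝ := ⟨mu, inferInstance⟩
  have h1 : Tendsto Pn atTop (𝓝 P) :=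
    ProbabilityMeasure.tendsto_iff_forall_integral_tendsto.mpr hnarrow
  have h2 : Tendsto (fun n => LevyProkhorov.probabilityMeasureHomeomorph (Pn n)) atTop
      (𝓝 (LevyProkhorov.probabilityMeasureHomeomorph P)) :=
    (LevyProkhorov.probabilityMeasureHomeomorph (Ω := ℝ)).continuous.continuousAt.tendsto.comp h1
  have h3 : Tendsto (fun n => dist (LevyProkhorov.probabilityMeasureHomeomorph (Pn n))
      (LevyProkhorov.probabilityMeasureHomeomorph P)) atTop (𝓝 0) :=
    tendsto_iff_dist_tendsto_zero.mp h2
  have hdd : ∀ n, dist (LevyProkhorov.probabilityMeasureHomeomorph (Pn n))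
      (LevyProkhorov.probabilityMeasureHomeomorph P)
      = (levyProkhorovEDist (mus n) mu).toReal := fun n => rfl
  simp only [hdd] at h3
  have h4 : Tendsto (fun n => ENNReal.ofReal (levyProkhorovEDist (mus n) mu).toReal) atTop
      (𝓝 (ENNReal.ofReal 0)) := (ENNReal.continuous_ofReal.continuousAt.tendsto).comp h3
  simpa only [ENNReal.ofReal_toReal (levyProkhorovEDist_ne_top _ _), ENNReal.ofReal_zero] using h4

lemma lp_to_narrow (nus : ℕ → Measure (ℝ × ℝ)) (nu : Measure (ℝ × ℝ))
    [∀ n, IsProbabilityMeasure (nus n)] [IsProbabilityMeasure nu]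
    (h : Tendsto (fun n => levyProkhorovEDist (nus n) nu) atTop (𝓝 0))
    (g : BoundedContinuousFunction (ℝ × ℝ) ℝ) :
    Tendsto (fun n => ∫ p, g p ∂(nus n)) atTop (𝓝 (∫ p, g p ∂nu)) := by
  set Qn : ℕ → LevyProkhorov (ProbabilityMeasure (ℝ × ℝ)) := fun n => ⟨nus n, inferInstance⟩
  set Q : LevyProkhorov (ProbabilityMeasure (ℝ × ℝ)) := ⟨nu, inferInstance⟩
  have h3 : Tendsto (fun n => dist (Qn n) Q) atTop (𝓝 0) := by
    have : ∀ n, dist (Qn n) Q = (levyProkhorovEDist (nus n) nu).toReal := fun n => rfl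
    simp only [this]
    have := (ENNReal.tendsto_toReal (by norm_num : (0:ℝ≥0∞) ≠ ∞)).comp h
    simpa [Function.comp_def] using this
  have h2 : Tendsto Qn atTop (𝓝 Q) := tendsto_iff_dist_tendsto_zero.mpr h3
  have h1 : Tendsto (fun n => LevyProkhorov.toMeasure (Qn n)) atTop
      (𝓝 (LevyProkhorov.toMeasure Q)) :=
    (LevyProkhorov.continuous_toMeasure_probabilityMeasure (Ω := ℝ × ℝ)).continuousAt.tendsto.comp h2
  exact ProbabilityMeasure.tendsto_iff_forall_integral_tendsto.mp h1 g

lemma prod_narrow (mus : ℕ → Measure ℝ) (mu : Measure ℝ)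
    [∀ n, IsProbabilityMeasure (mus n)] [IsProbabilityMeasure mu]
    (hnarrow : ∀ g : BoundedContinuousFunction ℝ ℝ,
      Tendsto (fun n => ∫ x, g x ∂(mus n)) atTop (𝓝 (∫ x, g x ∂mu)))
    (g : BoundedContinuousFunction (ℝ × ℝ) ℝ) :
    Tendsto (fun n => ∫ p, g p ∂((mus n).prod (mus n))) atTop
      (𝓝 (∫ p, g p ∂(mu.prod mu))) := by
  have h1 := narrow_to_lp mus mu hnarrow
  have h2 : Tendsto (fun n => 2 * levyProkhorovEDist (mus n) mu) atTop (𝓝 (2 * 0)) :=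
    ENNReal.Tendsto.const_mul h1 (Or.inr (by norm_num))
  rw [mul_zero] at h2
  have hsq : Tendsto (fun n => levyProkhorovEDist ((mus n).prod (mus n)) (mu.prod mu))
      atTop (𝓝 0) := by
    apply tendsto_of_tendsto_of_tendsto_of_le_of_le tendsto_const_nhds h2
    · exact fun n => zero_le
    · exact fun n => levyProkhorovEDist_prod_le (mus n) mu
  exact lp_to_narrow _ _ hsq g

lemma klog_measurable : Measurable klog :=
  Real.measurable_log.comp ((continuous_abs.comp (continuous_fst.sub continuous_snd)).measurable)

lemma klog_le (p : ℝ × ℝ) : klog p ≤ |p.1| + |p.2| := by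
  unfold klog
  rcases eq_or_ne p.1 p.2 with h | h
  · rw [h, sub_self, abs_zero, Real.log_zero]
    positivity
  · have hpos : 0 < |p.1 - p.2| := abs_pos.mpr (sub_ne_zero.mpr h)
    calc Real.log |p.1 - p.2| ≤ |p.1 - p.2| - 1 := Real.log_le_sub_one_of_pos hpos
      _ ≤ |p.1 - p.2| := by linarith
      _ ≤ |p.1| + |p.2| := abs_sub _ _

lemma integrable_abs_of_mom (ν : Measure ℝ) [IsProbabilityMeasure ν]
    (hmom : Integrable (fun x => x ^ 2) ν) : Integrable (fun x : ℝ => |x|) ν := by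
  refine ((integrable_const (1:ℝ)).add hmom).mono
    (continuous_abs.aestronglyMeasurable) (ae_of_all _ fun x => ?_)
  have h1 : |x| ≤ 1 + x ^ 2 := by nlinarith [abs_nonneg x, sq_abs x, sq_nonneg (|x| - 1)]
  have h2 : (0:ℝ) ≤ 1 + x ^ 2 := by positivity
  simp only [Real.norm_eq_abs, abs_abs, Pi.add_apply]
  rwa [abs_of_nonneg h2]

lemma integrable_absAdd (ν : Measure ℝ) [IsProbabilityMeasure ν]
    (hmom : Integrable (fun x => x ^ 2) ν) :
    Integrable (fun p : ℝ × ℝ => |p.1| + |p.2|) (ν.prod ν) := by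
  have h1 : Integrable (fun p : ℝ × ℝ => |p.1| * 1) (ν.prod ν) :=
    (integrable_abs_of_mom ν hmom).mul_prod (integrable_const 1)
  have h2 : Integrable (fun p : ℝ × ℝ => (1:ℝ) * |p.2|) (ν.prod ν) :=
    (integrable_const 1).mul_prod (integrable_abs_of_mom ν hmom)
  refine (h1.add h2).congr (ae_of_all _ fun p => ?_)
  simp

lemma lintegral_pos_part_lt_top (ν : Measure ℝ) [IsProbabilityMeasure ν]
    (hmom : Integrable (fun x => x ^ 2) ν) :
    (∫⁻ p : ℝ × ℝ, ENNReal.ofReal (klog p) ∂(ν.prod ν)) < ∞ := by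
  calc (∫⁻ p : ℝ × ℝ, ENNReal.ofReal (klog p) ∂(ν.prod ν))
      ≤ ∫⁻ p : ℝ × ℝ, ENNReal.ofReal (|p.1| + |p.2|) ∂(ν.prod ν) :=
        lintegral_mono fun p => ENNReal.ofReal_le_ofReal (klog_le p)
    _ < ∞ := (integrable_absAdd ν hmom).lintegral_lt_top

lemma integrable_klog (ν : Measure ℝ) [IsProbabilityMeasure ν]
    (hmom : Integrable (fun x => x ^ 2) ν)
    (hB : (∫⁻ p : ℝ × ℝ, ENNReal.ofReal (-klog p) ∂(ν.prod ν)) ≠ ∞) :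
    Integrable klog (ν.prod ν) := by
  refine ⟨klog_measurable.aestronglyMeasurable, ?_⟩
  rw [hasFiniteIntegral_iff_norm]
  calc (∫⁻ p, ENNReal.ofReal ‖klog p‖ ∂(ν.prod ν))
      ≤ ∫⁻ p, (ENNReal.ofReal (klog p) + ENNReal.ofReal (-klog p)) ∂(ν.prod ν) := by
        apply lintegral_mono
        intro p
        simp only [Real.norm_eq_abs]
        rcases le_or_gt 0 (klog p) with h | h
        · rw [abs_of_nonneg h]; exact le_add_right le_rfl
        · rw [abs_of_neg h]; exact le_add_left le_rfl
    _ < ∞ := by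
        rw [lintegral_add_left (klog_measurable.ennreal_ofReal)]
        exact ENNReal.add_lt_top.mpr
          ⟨lintegral_pos_part_lt_top ν hmom, lt_top_iff_ne_top.mpr hB⟩

lemma gker_continuous (m δ K : ℝ) (hδ : 0 < δ) : Continuous (gker m δ K) := by
  have h1 : Continuous fun t : ℝ => Real.log (|t| + δ) := by
    rw [continuous_iff_continuousAt]
    intro t
    exact (Real.continuousAt_log (by positivity)).comp
      ((continuous_abs.add continuous_const).continuousAt)
  exact ((h1.min continuous_const).max continuous_const).max
    (continuous_const.sub (continuous_abs.div_const δ))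

lemma gker_lb (m δ K t : ℝ) : -m ≤ gker m δ K t :=
  le_max_of_le_left (le_max_right _ _)

lemma gker_ub (m δ K t : ℝ) (hδ0 : 0 < δ) (hδ : δ ≤ 1) (hm : 0 ≤ m) :
    gker m δ K t ≤ |t| + m + 1 := by
  have habs : 0 ≤ |t| := abs_nonneg t
  have hlog : Real.log (|t| + δ) ≤ |t| := by
    calc Real.log (|t| + δ) ≤ Real.log (|t| + 1) :=
          Real.log_le_log (by positivity) (by linarith)
      _ ≤ (|t| + 1) - 1 := Real.log_le_sub_one_of_pos (by positivity)
      _ = |t| := by ring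
  apply max_le (max_le (le_trans (min_le_left _ _) (by linarith)) (by linarith))
  have : 0 ≤ |t| / δ := by positivity
  linarith

lemma gker_abs_le (m δ K t : ℝ) (hδ0 : 0 < δ) (hδ : δ ≤ 1) (hm : 0 ≤ m) :
    |gker m δ K t| ≤ |t| + m + 1 := by
  rw [abs_le]
  refine ⟨?_, gker_ub m δ K t hδ0 hδ hm⟩
  have := gker_lb m δ K t
  have := abs_nonneg t
  linarith

lemma gker_key (m δ K x y : ℝ) (hδ : 0 < δ) (hK : 1 ≤ K) (hm : 0 ≤ m) :
    Real.log |x - y| ≤ gker m δ K (x - y) + 2 / K * (x ^ 2 + y ^ 2) := by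
  have hK0 : (0:ℝ) < K := lt_of_lt_of_le one_pos hK
  have hnn : 0 ≤ 2 / K * (x ^ 2 + y ^ 2) := by positivity
  rcases eq_or_ne (x - y) 0 with h0 | h0
  · rw [h0, abs_zero, Real.log_zero]
    have h3 : δ - |(0:ℝ)| / δ ≤ gker m δ K 0 := le_max_right _ _
    have h4 : (0:ℝ) ≤ gker m δ K 0 := by
      refine le_trans ?_ h3
      rw [abs_zero, zero_div]
      linarith
    linarith
  · have hpos : 0 < |x - y| := abs_pos.mpr h0
    rcases le_or_gt (Real.log |x - y|) K with hle | hgt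
    · have h1 : Real.log |x - y| ≤ min (Real.log (|x - y| + δ)) K :=
        le_min (Real.log_le_log hpos (by linarith)) hle
      have h2 : min (Real.log (|x - y| + δ)) K ≤ gker m δ K (x - y) := by
        unfold gker
        exact le_trans (le_max_left _ _) (le_max_left _ _)
      linarith
    · have h1 : Real.log |x - y| ≤ |x - y| := by
        have := Real.log_le_sub_one_of_pos hpos
        linarith
      have h2 : |x - y| ≤ |x| + |y| := abs_sub _ _
      have hKlt : K < |x| + |y| := by linarith
      have hsq : (|x| + |y|) ^ 2 ≤ 2 * (x ^ 2 + y ^ 2) := by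
        nlinarith [sq_abs x, sq_abs y, sq_nonneg (|x| - |y|)]
      have h3 : |x| + |y| ≤ 2 / K * (x ^ 2 + y ^ 2) := by
        rw [div_mul_eq_mul_div, le_div_iff₀ hK0]
        nlinarith [abs_nonneg x, abs_nonneg y]
      have hgk : (0:ℝ) ≤ gker m δ K (x - y) := by
        have hmin : min (Real.log (|x - y| + δ)) K = K :=
          min_eq_right (by
            have : K < Real.log (|x - y| + δ) :=
              lt_of_lt_of_le hgt (Real.log_le_log hpos (by linarith))
            linarith)
        have : K ≤ gker m δ K (x - y) := by
          unfold gker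
          rw [hmin]
          exact le_trans (le_max_left _ _) (le_max_left _ _)
        linarith
      linarith

lemma gker_tendsto (m t : ℝ) (hm : 0 ≤ m) :
    Tendsto (fun j : ℕ => gker m (1 / (j + 1)) (j + 1) t) atTop
      (𝓝 (max (Real.log |t|) (-m))) := by
  have hδ : Tendsto (fun j : ℕ => (1:ℝ) / (j + 1)) atTop (𝓝 0) :=
    tendsto_one_div_add_atTop_nhds_zero_nat
  rcases eq_or_ne t 0 with ht | ht
  · -- eventually equal to δ_j, which tends to 0 = max (log 0) (-m)
    rw [ht, abs_zero, Real.log_zero, max_eq_left (by linarith)]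
    apply Tendsto.congr' _ hδ
    -- δ_j = gker eventually
    have hev : ∀ᶠ j : ℕ in atTop, Real.log (1 / (j + 1) : ℝ) ≤ -m := by
      have h2 : Tendsto (fun j : ℕ => Real.log (1 / (j + 1) : ℝ)) atTop atBot := by
        apply Real.tendsto_log_nhdsGT_zero.comp
        rw [tendsto_nhdsWithin_iff]
        exact ⟨hδ, Eventually.of_forall fun j => mem_Ioi.mpr (by positivity)⟩
      exact h2.eventually_le_atBot (-m)
    filter_upwards [hev] with j hj
    have hδ0 : (0:ℝ) < 1 / (j + 1) := by positivity
    unfold gker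
    rw [abs_zero, zero_add, zero_div, sub_zero]
    have h1 : min (Real.log (1 / (j + 1) : ℝ)) ((j:ℝ) + 1) = Real.log (1 / (j + 1) : ℝ) :=
      min_eq_left (by
        have : Real.log (1 / (j + 1) : ℝ) ≤ -m := hj
        have : (0:ℝ) ≤ (j:ℝ) + 1 := by positivity
        linarith)
    have h2 : max (min (Real.log (1 / ((j:ℝ) + 1))) ((j:ℝ)+1)) (-m) ≤ 1 / ((j:ℝ)+1) := by
      apply max_le _ (by linarith)
      rw [h1]; linarith
    exact (max_eq_right h2).symm
  · have hpos : 0 < |t| := abs_pos.mpr ht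
    have hlog : Tendsto (fun j : ℕ => Real.log (|t| + 1 / (j + 1))) atTop (𝓝 (Real.log |t|)) := by
      have : Tendsto (fun j : ℕ => |t| + 1 / (j + 1) : ℕ → ℝ) atTop (𝓝 (|t| + 0)) :=
        tendsto_const_nhds.add hδ
      rw [add_zero] at this
      exact ((Real.continuousAt_log hpos.ne').tendsto).comp this
    have hmain : Tendsto (fun j : ℕ => max (Real.log (|t| + 1 / (j + 1))) (-m)) atTop
        (𝓝 (max (Real.log |t|) (-m))) := hlog.max tendsto_const_nhds
    apply Tendsto.congr' _ hmain
    have hev1 : ∀ᶠ j : ℕ in atTop, Real.log (|t| + 1 / (j + 1)) ≤ (j:ℝ) + 1 := by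
      filter_upwards [eventually_ge_atTop (Nat.ceil |t|)] with j hj
      have hj' : |t| ≤ (j:ℝ) := le_trans (Nat.le_ceil _) (by exact_mod_cast hj)
      have hδ0 : (0:ℝ) < 1 / (j + 1) := by positivity
      have hδ1 : (1:ℝ) / (j + 1) ≤ 1 := by
        rw [div_le_one (by positivity)]
        have : (0:ℝ) ≤ (j:ℝ) := Nat.cast_nonneg j
        linarith
      calc Real.log (|t| + 1 / (j + 1)) ≤ (|t| + 1 / (j + 1)) - 1 :=
            Real.log_le_sub_one_of_pos (by positivity)
        _ ≤ (j:ℝ) + 1 := by linarith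
    have hev2 : ∀ᶠ j : ℕ in atTop, (1:ℝ) / (j + 1) - |t| / (1 / (j + 1)) ≤ -m := by
      have h2 : Tendsto (fun j : ℕ => (1:ℝ) / (j + 1) - |t| / (1 / (j + 1))) atTop atBot := by
        have h4 : Tendsto (fun j : ℕ => |t| * ((j:ℝ) + 1)) atTop atTop := by
          apply Tendsto.const_mul_atTop hpos
          exact tendsto_atTop_add_const_right _ _ tendsto_natCast_atTop_atTop
        have h5 : Tendsto (fun j : ℕ => 1 - |t| * ((j:ℝ)+1)) atTop atBot := by
          rw [tendsto_atBot]
          intro b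
          filter_upwards [h4.eventually_ge_atTop (1 - b)] with j hj
          linarith
        apply tendsto_atBot_mono _ h5
        intro j
        have h3 : |t| / (1 / ((j:ℝ) + 1)) = |t| * ((j:ℝ) + 1) := by
          field_simp
        have hδ1 : (1:ℝ) / ((j:ℝ) + 1) ≤ 1 := by
          rw [div_le_one (by positivity)]
          have : (0:ℝ) ≤ (j:ℝ) := Nat.cast_nonneg j
          linarith
        rw [h3]
        linarith
      exact h2.eventually_le_atBot (-m)
    filter_upwards [hev1, hev2] with j h1 h2
    unfold gker
    rw [min_eq_left h1]
    exact (max_eq_left (le_trans h2 (le_max_right _ _))).symm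

/-- The free entropy `E(mu) = (1/2)∫∫ log|x−y| dmu dmu`, as an extended real number:
one half of the difference between the lintegral of the positive part and the lintegral of
the negative part of `log|x−y|` with respect to the product measure. -/
noncomputable def freeEntropy (mu : Measure ℝ) : EReal :=
  ((1 / 2 : ℝ) : EReal) *
    (((∫⁻ p : ℝ × ℝ, ENNReal.ofReal (Real.log |p.1 - p.2|) ∂(mu.prod mu)) : EReal)
      - ((∫⁻ p : ℝ × ℝ, ENNReal.ofReal (-Real.log |p.1 - p.2|) ∂(mu.prod mu)) : EReal))

lemma coe_ennreal_eq (A : ℝ≥0∞) (hA : A ≠ ∞) : (A : EReal) = ((A.toReal : ℝ) : EReal) := by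
  rw [← ENNReal.ofReal_toReal hA, EReal.coe_ennreal_ofReal,
    max_eq_left ENNReal.toReal_nonneg, ENNReal.toReal_ofReal ENNReal.toReal_nonneg]

lemma freeEntropy_eq_bot (ν : Measure ℝ) [IsProbabilityMeasure ν]
    (hB : (∫⁻ p : ℝ × ℝ, ENNReal.ofReal (-klog p) ∂(ν.prod ν)) = ∞) :
    freeEntropy ν = ⊥ := by
  unfold freeEntropy
  have : (∫⁻ p : ℝ × ℝ, ENNReal.ofReal (-Real.log |p.1 - p.2|) ∂(ν.prod ν)) = ∞ := hB
  rw [this, EReal.coe_ennreal_top, EReal.sub_top]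
  exact EReal.coe_mul_bot_of_pos (by norm_num)

lemma freeEntropy_eq_coe (ν : Measure ℝ) [IsProbabilityMeasure ν]
    (hmom : Integrable (fun x => x ^ 2) ν)
    (hB : (∫⁻ p : ℝ × ℝ, ENNReal.ofReal (-klog p) ∂(ν.prod ν)) ≠ ∞) :
    freeEntropy ν = ((1 / 2 * ∫ p, klog p ∂(ν.prod ν) : ℝ) : EReal) := by
  unfold freeEntropy
  have hA : (∫⁻ p : ℝ × ℝ, ENNReal.ofReal (klog p) ∂(ν.prod ν)) ≠ ∞ :=
    (lintegral_pos_part_lt_top ν hmom).ne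
  have hint : ∫ p, klog p ∂(ν.prod ν)
      = (∫⁻ p : ℝ × ℝ, ENNReal.ofReal (klog p) ∂(ν.prod ν)).toReal
        - (∫⁻ p : ℝ × ℝ, ENNReal.ofReal (-klog p) ∂(ν.prod ν)).toReal :=
    integral_eq_lintegral_pos_part_sub_lintegral_neg_part (integrable_klog ν hmom hB)
  rw [show (∫⁻ p : ℝ × ℝ, ENNReal.ofReal (Real.log |p.1 - p.2|) ∂(ν.prod ν))
      = (∫⁻ p : ℝ × ℝ, ENNReal.ofReal (klog p) ∂(ν.prod ν)) from rfl,
    show (∫⁻ p : ℝ × ℝ, ENNReal.ofReal (-Real.log |p.1 - p.2|) ∂(ν.prod ν))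
      = (∫⁻ p : ℝ × ℝ, ENNReal.ofReal (-klog p) ∂(ν.prod ν)) from rfl,
    coe_ennreal_eq _ hA, coe_ennreal_eq _ hB, hint]
  rw [← EReal.coe_sub, ← EReal.coe_mul]

lemma integrable_gkerp (ν : Measure ℝ) [IsProbabilityMeasure ν]
    (hmom : Integrable (fun x => x ^ 2) ν) (m δ K : ℝ)
    (hδ0 : 0 < δ) (hδ : δ ≤ 1) (hm : 0 ≤ m) :
    Integrable (fun p : ℝ × ℝ => gker m δ K (p.1 - p.2)) (ν.prod ν) := by
  have hc : Continuous (fun p : ℝ × ℝ => gker m δ K (p.1 - p.2)) :=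
    (gker_continuous m δ K hδ0).comp (continuous_fst.sub continuous_snd)
  refine ((integrable_absAdd ν hmom).add (integrable_const (m + 1))).mono
    hc.aestronglyMeasurable (ae_of_all _ fun p => ?_)
  simp only [Real.norm_eq_abs, Pi.add_apply]
  have h1 := gker_abs_le m δ K (p.1 - p.2) hδ0 hδ hm
  have h2 : |p.1 - p.2| ≤ |p.1| + |p.2| := abs_sub _ _
  have h3 : (0:ℝ) ≤ |p.1| + |p.2| + (m + 1) := by positivity
  rw [abs_of_nonneg h3]
  linarith

lemma integrable_sqsum (ν : Measure ℝ) [IsProbabilityMeasure ν]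
    (hmom : Integrable (fun x => x ^ 2) ν) :
    Integrable (fun p : ℝ × ℝ => p.1 ^ 2 + p.2 ^ 2) (ν.prod ν) := by
  have h1 : Integrable (fun p : ℝ × ℝ => p.1 ^ 2 * 1) (ν.prod ν) :=
    hmom.mul_prod (integrable_const 1)
  have h2 : Integrable (fun p : ℝ × ℝ => (1:ℝ) * p.2 ^ 2) (ν.prod ν) :=
    (integrable_const 1).mul_prod hmom
  refine (h1.add h2).congr (ae_of_all _ fun p => ?_)
  simp

lemma integral_sqsum (ν : Measure ℝ) [IsProbabilityMeasure ν]
    (hmom : Integrable (fun x => x ^ 2) ν) :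
    ∫ p : ℝ × ℝ, (p.1 ^ 2 + p.2 ^ 2) ∂(ν.prod ν) = 2 * ∫ x, x ^ 2 ∂ν := by
  have h1 : ∫ p : ℝ × ℝ, (p.1 ^ 2 * 1) ∂(ν.prod ν) = (∫ x, x ^ 2 ∂ν) * ∫ _, (1:ℝ) ∂ν :=
    integral_prod_mul (f := fun x : ℝ => x ^ 2) (g := fun _ : ℝ => (1:ℝ)) (μ := ν) (ν := ν)
  have h2 : ∫ p : ℝ × ℝ, ((1:ℝ) * p.2 ^ 2) ∂(ν.prod ν) = (∫ _, (1:ℝ) ∂ν) * ∫ x, x ^ 2 ∂ν :=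
    integral_prod_mul (f := fun _ : ℝ => (1:ℝ)) (g := fun x : ℝ => x ^ 2) (μ := ν) (ν := ν)
  simp only [mul_one, one_mul, integral_const, measure_univ, ENNReal.toReal_one, smul_eq_mul, probReal_univ]
    at h1 h2
  calc ∫ p : ℝ × ℝ, (p.1 ^ 2 + p.2 ^ 2) ∂(ν.prod ν)
      = (∫ p : ℝ × ℝ, p.1 ^ 2 ∂(ν.prod ν)) + ∫ p : ℝ × ℝ, p.2 ^ 2 ∂(ν.prod ν) := by
        rw [← integral_add]
        · simpa using hmom.mul_prod (integrable_const 1)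
        · simpa using (integrable_const (1:ℝ)).mul_prod hmom
      _ = 2 * ∫ x, x ^ 2 ∂ν := by rw [h1, h2]; ring

lemma entropy_le (ν : Measure ℝ) [IsProbabilityMeasure ν]
    (hmom : Integrable (fun x => x ^ 2) ν) (m δ K : ℝ)
    (hδ0 : 0 < δ) (hδ : δ ≤ 1) (hK : 1 ≤ K) (hm : 0 ≤ m) :
    freeEntropy ν ≤ ((1 / 2 * ((∫ p : ℝ × ℝ, gker m δ K (p.1 - p.2) ∂(ν.prod ν))
      + 2 / K * (2 * ∫ x, x ^ 2 ∂ν)) : ℝ) : EReal) := by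
  by_cases hB : (∫⁻ p : ℝ × ℝ, ENNReal.ofReal (-klog p) ∂(ν.prod ν)) = ∞
  · rw [freeEntropy_eq_bot ν hB]; exact bot_le
  · rw [freeEntropy_eq_coe ν hmom hB, EReal.coe_le_coe_iff]
    have hint : ∫ p, klog p ∂(ν.prod ν)
        ≤ ∫ p : ℝ × ℝ, (gker m δ K (p.1 - p.2) + 2 / K * (p.1 ^ 2 + p.2 ^ 2)) ∂(ν.prod ν) := by
      apply integral_mono (integrable_klog ν hmom hB)
      · exact (integrable_gkerp ν hmom m δ K hδ0 hδ hm).add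
          ((integrable_sqsum ν hmom).const_mul _)
      · intro p
        exact gker_key m δ K p.1 p.2 hδ0 hK hm
    rw [integral_add (integrable_gkerp ν hmom m δ K hδ0 hδ hm)
      ((integrable_sqsum ν hmom).const_mul _), integral_const_mul, integral_sqsum ν hmom] at hint
    linarith

/-- **Upper semicontinuity of the free entropy.**
If probability measures `muₙ` with finite second moments converge narrowly to `mu` and their
second moments converge to that of `mu`, then `limsup E(muₙ) ≤ E(mu)` in `[−∞,∞)`. -/
theorem freeEntropy_limsup_le (mus : ℕ → Measure ℝ) (mu : Measure ℝ)
    [∀ n, IsProbabilityMeasure (mus n)] [IsProbabilityMeasure mu]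
    (hmom : ∀ n, Integrable (fun x => x ^ 2) (mus n))
    (hmom' : Integrable (fun x => x ^ 2) mu)
    (hnarrow : ∀ g : BoundedContinuousFunction ℝ ℝ,
      Tendsto (fun n => ∫ x, g x ∂(mus n)) atTop (𝓝 (∫ x, g x ∂mu)))
    (hmom_conv : Tendsto (fun n => ∫ x, x ^ 2 ∂(mus n)) atTop (𝓝 (∫ x, x ^ 2 ∂mu))) :
    Filter.limsup (fun n => freeEntropy (mus n)) atTop ≤ freeEntropy mu := by
  set S : ℝ := ∫ x, x ^ 2 ∂mu with hS
  set LS := Filter.limsup (fun n => freeEntropy (mus n)) atTop with hLS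
  -- Step 1: for all m j, LS ≤ half (∫ gker dμ² + (2/(j+1)) 2S)
  have key1 : ∀ m j : ℕ, LS ≤ ((1 / 2 * ((∫ p : ℝ × ℝ,
      gker m (1 / ((j:ℝ) + 1)) ((j:ℝ) + 1) (p.1 - p.2) ∂(mu.prod mu))
      + 2 / ((j:ℝ) + 1) * (2 * S)) : ℝ) : EReal) := by
    intro m j
    set δ : ℝ := 1 / ((j:ℝ) + 1) with hδdef
    set K : ℝ := (j:ℝ) + 1 with hKdef
    have hδ0 : 0 < δ := by positivity
    have hδ1 : δ ≤ 1 := by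
      rw [hδdef, div_le_one (by positivity)]
      have : (0:ℝ) ≤ (j:ℝ) := Nat.cast_nonneg j
      linarith
    have hK : 1 ≤ K := by
      rw [hKdef]
      have : (0:ℝ) ≤ (j:ℝ) := Nat.cast_nonneg j
      linarith
    have hm : (0:ℝ) ≤ (m:ℝ) := Nat.cast_nonneg m
    -- bounded continuous wrapper
    have hGcont : Continuous (fun p : ℝ × ℝ => gker m δ K (p.1 - p.2)) :=
      (gker_continuous m δ K hδ0).comp (continuous_fst.sub continuous_snd)
    have hGbdd : ∀ p : ℝ × ℝ, ‖gker (m:ℝ) δ K (p.1 - p.2)‖ ≤ (m:ℝ) + K + δ := by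
      intro p
      rw [Real.norm_eq_abs, abs_le]
      constructor
      · have := gker_lb (m:ℝ) δ K (p.1 - p.2)
        linarith
      · have h1 : gker (m:ℝ) δ K (p.1 - p.2) ≤ max (max K (-(m:ℝ))) δ := by
          unfold gker
          apply max_le_max
          · exact max_le_max (min_le_right _ _) le_rfl
          · have : 0 ≤ |p.1 - p.2| / δ := by positivity
            linarith
        have h2 : max (max K (-(m:ℝ))) δ ≤ (m:ℝ) + K + δ := by
          apply max_le (max_le (by linarith) (by linarith)) (by linarith)
        linarith
    set G : BoundedContinuousFunction (ℝ × ℝ) ℝ :=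
      BoundedContinuousFunction.ofNormedAddCommGroup _ hGcont _ hGbdd with hGdef
    have hGapp : ∀ p, G p = gker (m:ℝ) δ K (p.1 - p.2) := fun p => rfl
    have hGtend : Tendsto (fun n => ∫ p : ℝ × ℝ, gker (m:ℝ) δ K (p.1 - p.2)
        ∂((mus n).prod (mus n))) atTop
        (𝓝 (∫ p : ℝ × ℝ, gker (m:ℝ) δ K (p.1 - p.2) ∂(mu.prod mu))) := by
      have := prod_narrow mus mu hnarrow G
      simpa only [hGapp] using this
    have hctend : Tendsto (fun n => (1 / 2 * ((∫ p : ℝ × ℝ,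
        gker (m:ℝ) δ K (p.1 - p.2) ∂((mus n).prod (mus n)))
        + 2 / K * (2 * ∫ x, x ^ 2 ∂(mus n))) : ℝ)) atTop
        (𝓝 ((1 / 2 * ((∫ p : ℝ × ℝ, gker (m:ℝ) δ K (p.1 - p.2) ∂(mu.prod mu))
        + 2 / K * (2 * S)) : ℝ))) := by
      apply Tendsto.const_mul
      exact hGtend.add ((hmom_conv.const_mul (2:ℝ)).const_mul (2 / K))
    calc LS ≤ Filter.limsup (fun n => (((1 / 2 * ((∫ p : ℝ × ℝ,
          gker (m:ℝ) δ K (p.1 - p.2) ∂((mus n).prod (mus n)))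
          + 2 / K * (2 * ∫ x, x ^ 2 ∂(mus n))) : ℝ)) : EReal)) atTop := by
          exact Filter.limsup_le_limsup (Eventually.of_forall fun n =>
            entropy_le (mus n) (hmom n) (m:ℝ) δ K hδ0 hδ1 hK hm)
      _ = _ := Tendsto.limsup_eq (EReal.tendsto_coe.mpr hctend)
  -- Step 2: for all m, LS ≤ half ∫ max(klog)(-m) dμ²
  have key2 : ∀ m : ℕ, LS ≤
      ((1 / 2 * ∫ p : ℝ × ℝ, max (klog p) (-(m:ℝ)) ∂(mu.prod mu) : ℝ) : EReal) := by
    intro m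
    have hm : (0:ℝ) ≤ (m:ℝ) := Nat.cast_nonneg m
    have hDCT : Tendsto (fun j : ℕ => ∫ p : ℝ × ℝ,
        gker (m:ℝ) (1 / ((j:ℝ) + 1)) ((j:ℝ) + 1) (p.1 - p.2) ∂(mu.prod mu)) atTop
        (𝓝 (∫ p : ℝ × ℝ, max (klog p) (-(m:ℝ)) ∂(mu.prod mu))) := by
      apply tendsto_integral_of_dominated_convergence
        (fun p : ℝ × ℝ => (|p.1| + |p.2|) + ((m:ℝ) + 1))
      · intro j
        have hδ0 : (0:ℝ) < 1 / ((j:ℝ) + 1) := by positivity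
        exact ((gker_continuous (m:ℝ) _ _ hδ0).comp
          (continuous_fst.sub continuous_snd)).aestronglyMeasurable
      · exact (integrable_absAdd mu hmom').add (integrable_const _)
      · intro j
        apply ae_of_all
        intro p
        have hδ0 : (0:ℝ) < 1 / ((j:ℝ) + 1) := by positivity
        have hδ1 : (1:ℝ) / ((j:ℝ) + 1) ≤ 1 := by
          rw [div_le_one (by positivity)]
          have : (0:ℝ) ≤ (j:ℝ) := Nat.cast_nonneg j
          linarith
        have h1 := gker_abs_le (m:ℝ) (1 / ((j:ℝ) + 1)) ((j:ℝ) + 1) (p.1 - p.2) hδ0 hδ1 hm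
        have h2 : |p.1 - p.2| ≤ |p.1| + |p.2| := abs_sub _ _
        rw [Real.norm_eq_abs]
        linarith
      · apply ae_of_all
        intro p
        exact gker_tendsto (m:ℝ) (p.1 - p.2) hm
    have hc2 : Tendsto (fun j : ℕ => (1 / 2 * ((∫ p : ℝ × ℝ,
        gker (m:ℝ) (1 / ((j:ℝ) + 1)) ((j:ℝ) + 1) (p.1 - p.2) ∂(mu.prod mu))
        + 2 / ((j:ℝ) + 1) * (2 * S)) : ℝ)) atTop
        (𝓝 ((1 / 2 * ∫ p : ℝ × ℝ, max (klog p) (-(m:ℝ)) ∂(mu.prod mu) : ℝ))) := by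
      have hz : Tendsto (fun j : ℕ => 2 / ((j:ℝ) + 1) * (2 * S)) atTop (𝓝 0) := by
        have h0 : Tendsto (fun j : ℕ => (1:ℝ) / ((j:ℝ) + 1)) atTop (𝓝 0) :=
          tendsto_one_div_add_atTop_nhds_zero_nat
        have : Tendsto (fun j : ℕ => (2 * (2 * S)) * (1 / ((j:ℝ) + 1))) atTop
            (𝓝 ((2 * (2 * S)) * 0)) := h0.const_mul _
        rw [mul_zero] at this
        apply this.congr
        intro j
        ring
      have := (hDCT.add hz).const_mul (1/2 : ℝ)
      rw [add_zero] at this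
      exact this
    exact ge_of_tendsto' (EReal.tendsto_coe.mpr hc2) (fun j => key1 m j)
  -- Step 3: pass to the limit in m
  by_cases hB : (∫⁻ p : ℝ × ℝ, ENNReal.ofReal (-klog p) ∂(mu.prod mu)) = ∞
  · -- entropy is -∞; the truncated integrals tend to -∞
    rw [freeEntropy_eq_bot mu hB]
    -- decompose ∫ max (klog p) (-m) = ∫ pos - ∫ min(neg, m)
    set pos : ℝ × ℝ → ℝ := fun p => max (klog p) 0 with hposdef
    set P : ℝ := ∫ p : ℝ × ℝ, pos p ∂(mu.prod mu) with hP
    have hpos_int : Integrable pos (mu.prod mu) := by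
      refine (integrable_absAdd mu hmom').mono
        ((klog_measurable.max measurable_const).aestronglyMeasurable) (ae_of_all _ fun p => ?_)
      have h2 : (0:ℝ) ≤ |p.1| + |p.2| := by positivity
      simp only [Real.norm_eq_abs]
      rw [abs_of_nonneg (le_max_right (klog p) 0), abs_of_nonneg h2]
      exact max_le (klog_le p) h2
    have hmin_int : ∀ m : ℕ, Integrable
        (fun p : ℝ × ℝ => min (max (-(klog p)) 0) (m:ℝ)) (mu.prod mu) := by
      intro m
      refine (integrable_const (m:ℝ)).mono
        (((klog_measurable.neg.max measurable_const).min measurable_const).aestronglyMeasurable)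
        (ae_of_all _ fun p => ?_)
      have hnn : (0:ℝ) ≤ min (max (-(klog p)) 0) (m:ℝ) :=
        le_min (le_max_right _ _) (Nat.cast_nonneg m)
      rw [Real.norm_eq_abs, abs_of_nonneg hnn, Real.norm_eq_abs,
        abs_of_nonneg (Nat.cast_nonneg m)]
      exact min_le_right _ _
    have hdecomp : ∀ m : ℕ, (∫ p : ℝ × ℝ, max (klog p) (-(m:ℝ)) ∂(mu.prod mu))
        = P - ∫ p : ℝ × ℝ, min (max (-(klog p)) 0) (m:ℝ) ∂(mu.prod mu) := by
      intro m
      rw [hP, ← integral_sub hpos_int (hmin_int m)]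
      apply integral_congr_ae
      apply ae_of_all
      intro p
      have hm : (0:ℝ) ≤ (m:ℝ) := Nat.cast_nonneg m
      show max (klog p) (-(m:ℝ)) = max (klog p) 0 - min (max (-(klog p)) 0) (m:ℝ)
      rcases le_total 0 (klog p) with h | h
      · rw [max_eq_left (by linarith : -(m:ℝ) ≤ klog p), max_eq_left h,
          max_eq_right (by linarith : -(klog p) ≤ 0), min_eq_left hm, sub_zero]
      · rcases le_total (-(m:ℝ)) (klog p) with h2 | h2
        · rw [max_eq_left h2, max_eq_right h,
            max_eq_left (by linarith : (0:ℝ) ≤ -(klog p)),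
            min_eq_left (by linarith : -(klog p) ≤ (m:ℝ))]
          ring
        · rw [max_eq_right h2, max_eq_right h,
            max_eq_left (by linarith : (0:ℝ) ≤ -(klog p)),
            min_eq_right (by linarith : (m:ℝ) ≤ -(klog p))]
          ring
    -- lintegral identity and monotone convergence
    set L : ℕ → ℝ≥0∞ := fun m => ∫⁻ p : ℝ × ℝ,
      ENNReal.ofReal (min (max (-(klog p)) 0) (m:ℝ)) ∂(mu.prod mu) with hL
    have hLne : ∀ m, L m ≠ ∞ := by
      intro m
      have : L m ≤ ∫⁻ _ : ℝ × ℝ, ENNReal.ofReal (m:ℝ) ∂(mu.prod mu) := by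
        apply lintegral_mono
        intro p
        exact ENNReal.ofReal_le_ofReal (min_le_right _ _)
      rw [lintegral_const, measure_univ, mul_one] at this
      exact (lt_of_le_of_lt this ENNReal.ofReal_lt_top).ne
    have hIL : ∀ m : ℕ, (∫ p : ℝ × ℝ, min (max (-(klog p)) 0) (m:ℝ) ∂(mu.prod mu))
        = (L m).toReal := by
      intro m
      rw [integral_eq_lintegral_of_nonneg_ae
        (f := fun p : ℝ × ℝ => min (max (-(klog p)) 0) (m:ℝ))
        (ae_of_all _ fun p => le_min (le_max_right _ _) (Nat.cast_nonneg m))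
        (Measurable.aestronglyMeasurable (by
          exact ((klog_measurable.neg.max measurable_const).min measurable_const)))]
    have hLtop : Tendsto L atTop (𝓝 ⊤) := by
      have hofReal : ∀ a : ℝ, ENNReal.ofReal (max a 0) = ENNReal.ofReal a := by
        intro a
        rcases le_total a 0 with h | h
        · rw [max_eq_right h, ENNReal.ofReal_zero,
            eq_comm, ENNReal.ofReal_eq_zero.mpr h]
        · rw [max_eq_left h]
      have hptw : ∀ p : ℝ × ℝ, Tendsto (fun m : ℕ =>
          ENNReal.ofReal (min (max (-(klog p)) 0) (m:ℝ))) atTop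
          (𝓝 (ENNReal.ofReal (-(klog p)))) := by
        intro p
        have hev : ∀ᶠ m : ℕ in atTop, min (max (-(klog p)) 0) (m:ℝ) = max (-(klog p)) 0 := by
          filter_upwards [eventually_ge_atTop (Nat.ceil (max (-(klog p)) 0))] with m hm
          exact min_eq_left (le_trans (Nat.le_ceil _) (by exact_mod_cast hm))
        have h5 : (fun _ : ℕ => ENNReal.ofReal (-(klog p))) =ᶠ[atTop]
            (fun m : ℕ => ENNReal.ofReal (min (max (-(klog p)) 0) (m:ℝ))) := by
          filter_upwards [hev] with m h
          rw [h, hofReal]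
        exact Tendsto.congr' h5 tendsto_const_nhds
      have h6 := lintegral_tendsto_of_tendsto_of_monotone
        (f := fun m : ℕ => fun p : ℝ × ℝ => ENNReal.ofReal (min (max (-(klog p)) 0) (m:ℝ)))
        (F := fun p : ℝ × ℝ => ENNReal.ofReal (-(klog p))) (μ := mu.prod mu)
        (fun m => (((klog_measurable.neg.max measurable_const).min
          measurable_const).ennreal_ofReal).aemeasurable)
        (ae_of_all _ fun p m₁ m₂ h12 => ENNReal.ofReal_le_ofReal
          (min_le_min le_rfl (by exact_mod_cast h12)))
        (ae_of_all _ hptw)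
      rw [hB] at h6
      exact h6
    -- toReal of L tends to atTop
    have hr : Tendsto (fun m : ℕ => (L m).toReal) atTop atTop := by
      rw [Filter.tendsto_atTop]
      intro b
      filter_upwards [hLtop.eventually (lt_mem_nhds
        (show ENNReal.ofReal b < ⊤ from ENNReal.ofReal_lt_top))] with m hm
      exact (ENNReal.ofReal_le_iff_le_toReal (hLne m)).mp hm.le
    have hdbot : Tendsto (fun m : ℕ =>
        (1 / 2 * ∫ p : ℝ × ℝ, max (klog p) (-(m:ℝ)) ∂(mu.prod mu) : ℝ)) atTop atBot := by
      rw [Filter.tendsto_atBot]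
      intro b
      filter_upwards [hr.eventually_ge_atTop (P - 2 * b)] with m hm
      rw [hdecomp m, hIL m]
      linarith
    have hbot : Tendsto (fun m : ℕ =>
        (((1 / 2 * ∫ p : ℝ × ℝ, max (klog p) (-(m:ℝ)) ∂(mu.prod mu) : ℝ)) : EReal)) atTop
        (𝓝 ⊥) := by
      rw [EReal.tendsto_nhds_bot_iff_real]
      intro x
      filter_upwards [hdbot.eventually_lt_atBot x] with m hm
      exact_mod_cast EReal.coe_lt_coe_iff.mpr hm
    exact ge_of_tendsto' hbot key2
  · -- entropy finite-negative-part case: dominated convergence in m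
    rw [freeEntropy_eq_coe mu hmom' hB]
    have hDCT2 : Tendsto (fun m : ℕ => ∫ p : ℝ × ℝ, max (klog p) (-(m:ℝ)) ∂(mu.prod mu))
        atTop (𝓝 (∫ p, klog p ∂(mu.prod mu))) := by
      have hkint := integrable_klog mu hmom' hB
      apply tendsto_integral_of_dominated_convergence (fun p => |klog p|)
      · intro m
        exact (klog_measurable.max measurable_const).aestronglyMeasurable
      · exact hkint.abs
      · intro m
        apply ae_of_all
        intro p
        rw [Real.norm_eq_abs, abs_le]
        have hm : (0:ℝ) ≤ (m:ℝ) := Nat.cast_nonneg m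
        constructor
        · have : -(|klog p|) ≤ klog p := neg_abs_le _
          have h2 : klog p ≤ max (klog p) (-(m:ℝ)) := le_max_left _ _
          linarith
        · apply max_le (le_abs_self _)
          have : -(m:ℝ) ≤ 0 := by linarith
          exact le_trans this (abs_nonneg _)
      · apply ae_of_all
        intro p
        have hev : ∀ᶠ m : ℕ in atTop, max (klog p) (-(m:ℝ)) = klog p := by
          filter_upwards [eventually_ge_atTop (Nat.ceil (-(klog p)))] with m hm
          apply max_eq_left
          have : -(klog p) ≤ (m:ℝ) := le_trans (Nat.le_ceil _) (by exact_mod_cast hm)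
          linarith
        exact Tendsto.congr' (hev.mono fun m h => h.symm) tendsto_const_nhds
    have hc3 : Tendsto (fun m : ℕ =>
        ((1 / 2 * ∫ p : ℝ × ℝ, max (klog p) (-(m:ℝ)) ∂(mu.prod mu) : ℝ) : EReal)) atTop
        (𝓝 ((1 / 2 * ∫ p, klog p ∂(mu.prod mu) : ℝ) : EReal)) :=
      EReal.tendsto_coe.mpr (hDCT2.const_mul _)
    exact ge_of_tendsto' hc3 key2
end

section
/- For every t₁ > 0 there exists no differentiable function λ : [t₁,∞) → ℝ such that λ(t) > √t for all t ≥ t₁ and λ′(t) = (λ(t) − √(λ(t)² − t))/(2t) for all t ≥ t₁. Equivalently, any differentiable solution of this ODE starting above the curve t ↦ √t must touch the curve λ = √t in finite time. -/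
open Set

/-- **The outlier reaches the bulk in finite time.**
For every `t₁ > 0` there is no differentiable function `λ : [t₁,∞) → ℝ` staying strictly
above the curve `t ↦ √t` and solving `λ'(t) = (λ(t) − √(λ(t)² − t))/(2t)` on `[t₁,∞)`. -/
theorem no_global_outlier (t₁ : ℝ) (ht₁ : 0 < t₁) :
    ¬ ∃ lam : ℝ → ℝ,
      (∀ t, t₁ ≤ t → Real.sqrt t < lam t) ∧
      (∀ t, t₁ ≤ t →
        HasDerivWithinAt lam ((lam t - Real.sqrt ((lam t) ^ 2 - t)) / (2 * t)) (Ici t₁) t) := by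
  rintro ⟨lam, habove, hode⟩
  set y : ℝ → ℝ := fun t => lam t + Real.sqrt ((lam t) ^ 2 - t) with hy_def
  -- basic facts at each point
  have hpos : ∀ t, t₁ ≤ t → 0 < (lam t) ^ 2 - t := by
    intro t ht
    have h1 := habove t ht
    have hsq : Real.sqrt t ^ 2 = t := Real.sq_sqrt (ht₁.le.trans ht)
    nlinarith [Real.sqrt_nonneg t]
  have hs_pos : ∀ t, t₁ ≤ t → 0 < Real.sqrt ((lam t) ^ 2 - t) := fun t ht =>
    Real.sqrt_pos.2 (hpos t ht)
  -- y has derivative 0 within Ici t₁ at each point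
  have hy : ∀ t, t₁ ≤ t → HasDerivWithinAt y 0 (Ici t₁) t := by
    intro t ht
    have hlam := hode t ht
    set a := lam t
    set s := Real.sqrt (a ^ 2 - t) with hs_def
    set d : ℝ := (a - s) / (2 * t)
    have hinner : HasDerivWithinAt (fun u => (lam u) ^ 2 - u) (2 * a * d - 1) (Ici t₁) t := by
      have := (hlam.pow 2).sub (hasDerivWithinAt_id t (Ici t₁))
      refine this.congr_deriv ?_
      norm_num [d]
      exact Or.inl rfl
    have hne : (fun u => (lam u) ^ 2 - u) t ≠ 0 := (hpos t ht).ne'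
    have hsqrt : HasDerivWithinAt (fun u => Real.sqrt ((lam u) ^ 2 - u))
        ((2 * a * d - 1) / (2 * s)) (Ici t₁) t := hinner.sqrt hne
    have hsum : HasDerivWithinAt y (d + (2 * a * d - 1) / (2 * s)) (Ici t₁) t :=
      hlam.add hsqrt
    have hzero : d + (2 * a * d - 1) / (2 * s) = 0 := by
      have hs2 : s ^ 2 = a ^ 2 - t := Real.sq_sqrt (hpos t ht).le
      have hsne : s ≠ 0 := (hs_pos t ht).ne'
      have htne : t ≠ 0 := (ht₁.trans_le ht).ne'
      simp only [d]
      field_simp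
      nlinarith [hs2]
    rwa [hzero] at hsum
  -- hence y is constant on Ici t₁
  have hconst : ∀ t, t₁ ≤ t → y t = y t₁ := by
    intro t ht
    have hcv : Convex ℝ (Ici t₁) := convex_Ici t₁
    have hdiff : DifferentiableOn ℝ y (Ici t₁) := fun z hz =>
      (hy z hz).differentiableWithinAt
    have hfd : ∀ z ∈ Ici t₁, fderivWithin ℝ y (Ici t₁) z = 0 := by
      intro z hz
      have := ((hy z hz).hasFDerivWithinAt).fderivWithin (uniqueDiffOn_Ici t₁ z hz)
      rw [this]
      ext
      simp
    exact hcv.is_const_of_fderivWithin_eq_zero hdiff hfd ht self_mem_Ici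
  -- derive a contradiction at a large time
  set T : ℝ := max t₁ ((y t₁) ^ 2)
  have hT : t₁ ≤ T := le_max_left _ _
  have h1 : Real.sqrt T < lam T := habove T hT
  have h2 : lam T ≤ y T := le_add_of_nonneg_right (Real.sqrt_nonneg _)
  have h3 : y T = y t₁ := hconst T hT
  have h4 : y t₁ ≤ Real.sqrt T := by
    calc y t₁ ≤ |y t₁| := le_abs_self _
    _ = Real.sqrt ((y t₁) ^ 2) := (Real.sqrt_sq_eq_abs _).symm
    _ ≤ Real.sqrt T := Real.sqrt_le_sqrt (le_max_right _ _)
  linarith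
end

section
/- For every r > 0 and every x > r, ∫_{−r}^{r} (2/(π r²)) √(r² − y²) · (x − y)⁻¹ dy = (2/r²)(x − √(x² − r²)). -/
open MeasureTheory intervalIntegral
set_option maxHeartbeats 2000000 in

/-- **Stieltjes transform of the semicircular density.**
For every `r > 0` and every `x > r`,
`∫_{−r}^{r} (2/(π r²)) √(r² − y²) / (x − y) dy = (2/r²)(x − √(x² − r²))`. -/
theorem semicircle_stieltjes (r x : ℝ) (hr : 0 < r) (hx : r < x) :
    ∫ y in (-r)..r, (2 / (Real.pi * r ^ 2)) * Real.sqrt (r ^ 2 - y ^ 2) / (x - y)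
      = (2 / r ^ 2) * (x - Real.sqrt (x ^ 2 - r ^ 2)) := by
  have hpi : Real.pi ≠ 0 := Real.pi_ne_zero
  set c : ℝ := 2 / (Real.pi * r ^ 2) with hc
  set t : ℝ := Real.sqrt (x ^ 2 - r ^ 2) with ht
  have hx0 : (0:ℝ) < x := lt_trans hr hx
  have ht2 : t ^ 2 = x ^ 2 - r ^ 2 := Real.sq_sqrt (by nlinarith)
  have htpos : 0 < t := Real.sqrt_pos.mpr (by nlinarith)
  set F : ℝ → ℝ := fun y =>
    c * (x * Real.arcsin (y / r) - Real.sqrt (r ^ 2 - y ^ 2)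
      + t * Real.arcsin ((r ^ 2 - x * y) / (r * (x - y)))) with hF
  have hxy' : ∀ y ∈ Set.Icc (-r) r, r * (x - y) ≠ 0 := by
    intro y hy
    have : 0 < x - y := by linarith [hy.2]
    positivity
  have key : ∫ y in (-r)..r, (2 / (Real.pi * r ^ 2)) * Real.sqrt (r ^ 2 - y ^ 2) / (x - y)
      = F r - F (-r) := by
    apply intervalIntegral.integral_eq_sub_of_hasDeriv_right_of_le (by linarith)
    · -- continuity of F on Icc
      apply ContinuousOn.mul continuousOn_const
      apply ContinuousOn.add
      · apply ContinuousOn.sub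
        · exact (continuousOn_const.mul ((Real.continuous_arcsin.comp
            (continuous_id.div_const r)).continuousOn))
        · exact (Real.continuous_sqrt.comp (by continuity)).continuousOn
      · apply continuousOn_const.mul
        apply Real.continuous_arcsin.comp_continuousOn
        exact ContinuousOn.div (by fun_prop) (by fun_prop) hxy'
    · -- derivative on Ioo
      intro y hy
      obtain ⟨hy1, hy2⟩ := hy
      have hxy : 0 < x - y := by linarith
      have hs2 : 0 < r ^ 2 - y ^ 2 := by nlinarith
      set s := Real.sqrt (r ^ 2 - y ^ 2) with hs
      have hspos : 0 < s := Real.sqrt_pos.mpr hs2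
      have hssq : s ^ 2 = r ^ 2 - y ^ 2 := Real.sq_sqrt hs2.le
      have hden : r * (x - y) ≠ 0 := by positivity
      have hyr1 : y / r ≠ 1 := by
        intro h; rw [div_eq_one_iff_eq hr.ne'] at h; linarith
      have hyr1' : y / r ≠ -1 := by
        intro h
        have : y = -r := by field_simp at h; linarith
        linarith
      have hune1 : (r ^ 2 - x * y) / (r * (x - y)) ≠ 1 := by
        intro h
        rw [div_eq_one_iff_eq hden] at h
        nlinarith
      have hune1' : (r ^ 2 - x * y) / (r * (x - y)) ≠ -1 := by
        intro h
        rw [div_eq_iff hden] at h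
        nlinarith
      -- pieces
      have hA : HasDerivAt (fun z : ℝ => Real.arcsin (z / r))
          (1 / Real.sqrt (1 - (y / r) ^ 2) * (1 / r)) y := by
        have := (Real.hasDerivAt_arcsin hyr1' hyr1).comp y ((hasDerivAt_id y).div_const r)
        simpa [Function.comp_def] using this
      have hB : HasDerivAt (fun z : ℝ => Real.sqrt (r ^ 2 - z ^ 2))
          (1 / (2 * s) * (-(2 * y))) y := by
        have hinner : HasDerivAt (fun z : ℝ => r ^ 2 - z ^ 2) (-(2 * y)) y := by
          simpa using ((hasDerivAt_pow 2 y).const_sub (r ^ 2))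
        exact (Real.hasDerivAt_sqrt hs2.ne').comp y hinner
      have hu : HasDerivAt (fun z : ℝ => (r ^ 2 - x * z) / (r * (x - z)))
          ((-x * (r * (x - y)) - (r ^ 2 - x * y) * (r * (-1))) / (r * (x - y)) ^ 2) y := by
        have hnum : HasDerivAt (fun z : ℝ => r ^ 2 - x * z) (-x) y := by
          simpa using ((hasDerivAt_id y).const_mul x).const_sub (r ^ 2)
        have hden' : HasDerivAt (fun z : ℝ => r * (x - z)) (r * (-1)) y := by
          simpa using (((hasDerivAt_id y).const_sub x).const_mul r)
        exact hnum.div hden' hden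
      have hC : HasDerivAt (fun z : ℝ => Real.arcsin ((r ^ 2 - x * z) / (r * (x - z))))
          (1 / Real.sqrt (1 - ((r ^ 2 - x * y) / (r * (x - y))) ^ 2) *
            ((-x * (r * (x - y)) - (r ^ 2 - x * y) * (r * (-1))) / (r * (x - y)) ^ 2)) y := by
        exact (Real.hasDerivAt_arcsin hune1' hune1).comp y hu
      have hFtot : HasDerivAt F
          (c * (x * (1 / Real.sqrt (1 - (y / r) ^ 2) * (1 / r))
            - 1 / (2 * s) * (-(2 * y))
            + t * (1 / Real.sqrt (1 - ((r ^ 2 - x * y) / (r * (x - y))) ^ 2) *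
              ((-x * (r * (x - y)) - (r ^ 2 - x * y) * (r * (-1))) / (r * (x - y)) ^ 2)))) y := by
        exact (((hA.const_mul x).sub hB).add (hC.const_mul t)).const_mul c
      have hsq1 : Real.sqrt (1 - (y / r) ^ 2) = s / r := by
        rw [show 1 - (y / r) ^ 2 = (s / r) ^ 2 by
          field_simp; nlinarith]
        exact Real.sqrt_sq (by positivity)
      have hsq2 : Real.sqrt (1 - ((r ^ 2 - x * y) / (r * (x - y))) ^ 2)
          = s * t / (r * (x - y)) := by
        rw [show 1 - ((r ^ 2 - x * y) / (r * (x - y))) ^ 2 = (s * t / (r * (x - y))) ^ 2 by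
          field_simp; nlinarith]
        exact Real.sqrt_sq (by positivity)
      have heq : c * (x * (1 / Real.sqrt (1 - (y / r) ^ 2) * (1 / r))
            - 1 / (2 * s) * (-(2 * y))
            + t * (1 / Real.sqrt (1 - ((r ^ 2 - x * y) / (r * (x - y))) ^ 2) *
              ((-x * (r * (x - y)) - (r ^ 2 - x * y) * (r * (-1))) / (r * (x - y)) ^ 2)))
          = 2 / (Real.pi * r ^ 2) * Real.sqrt (r ^ 2 - y ^ 2) / (x - y) := by
        rw [hsq1, hsq2, ← hs, hc]
        have e1 : 1 / (s / r) * (1 / r) = 1 / s := by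
          field_simp
        have e2 : 1 / (2 * s) * (-(2 * y)) = -y / s := by
          field_simp
        have e3 : 1 / (s * t / (r * (x - y))) *
            ((-x * (r * (x - y)) - (r ^ 2 - x * y) * (r * (-1))) / (r * (x - y)) ^ 2)
            = (r ^ 2 - x ^ 2) / (s * t * (x - y)) := by
          field_simp
          ring
        rw [e1, e2, e3]
        field_simp
        ring_nf
        linear_combination (-1 : ℝ) * hssq
      rw [← heq]
      exact hFtot.hasDerivWithinAt
    · -- integrability
      apply ContinuousOn.intervalIntegrable
      apply ContinuousOn.div (by fun_prop)
      · fun_prop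
      · intro y hy
        rw [Set.uIcc_of_le (by linarith : -r ≤ r)] at hy
        have : 0 < x - y := by linarith [hy.2]
        exact this.ne'
  rw [key, hF]
  have h1 : Real.arcsin (r / r) = Real.pi / 2 := by
    rw [div_self hr.ne', Real.arcsin_one]
  have h2 : Real.arcsin (-r / r) = -(Real.pi / 2) := by
    rw [neg_div, div_self hr.ne', Real.arcsin_neg, Real.arcsin_one]
  have h3 : Real.sqrt (r ^ 2 - r ^ 2) = 0 := by simp
  have h4 : Real.sqrt (r ^ 2 - (-r) ^ 2) = 0 := by simp
  have h5 : (r ^ 2 - x * r) / (r * (x - r)) = -1 := by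
    rw [div_eq_iff (ne_of_gt (by nlinarith : (0:ℝ) < r * (x - r)))]; ring
  have h6 : (r ^ 2 - x * (-r)) / (r * (x - (-r))) = 1 := by
    rw [div_eq_one_iff_eq (ne_of_gt (by nlinarith : (0:ℝ) < r * (x - (-r))))]; ring
  simp only [h1, h2, h3, h4, h5, h6, Real.arcsin_one, Real.arcsin_neg_one]
  rw [hc]
  field_simp
  ring
end
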